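/- Let ψ(c,y) ≡ T^{−1}(f(c,y)) be the source decoder induced by the MAP SC decoder f (for an arbitrary partition into index sets I1, I0, not necessarily ordered). Then Prob(ψ(AX,Y) ≠ X) ≤ (1/2) · Σ_{i∈I0} H(C_i | C_1^{i−1}, Y), where H denotes conditional Shannon entropy measured in bits (logarithm base 2). -/

import Mathlib

open Finset

noncomputable def probOf {Ω : Type*} [Fintype Ω] (p : Ω → ℝ) (E : Set Ω) : ℝ :=
  ∑ ω, E.indicator p ω

noncomputable def condProb {Ω : Type*} [Fintype Ω] (p : Ω → ℝ) (E F : Set Ω) : ℝ :=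
  probOf p (E ∩ F) / probOf p F

noncomputable def entropyOf {Ω Z : Type*} [Fintype Ω] [Fintype Z] (p : Ω → ℝ) (V : Ω → Z) : ℝ :=
  ∑ z, Real.negMulLog (probOf p {ω | V ω = z})

noncomputable def condEntropyOf {Ω U V : Type*} [Fintype Ω] [Fintype U] [Fintype V]
    (p : Ω → ℝ) (Uv : Ω → U) (Vv : Ω → V) : ℝ :=
  entropyOf p (fun ω => (Uv ω, Vv ω)) - entropyOf p Vv

def prefixVec {𝒳 : Type*} {n : ℕ} (c : Fin n → 𝒳) (m : ℕ) (h : m ≤ n) : Fin m → 𝒳 :=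
  fun k => c ⟨k.1, lt_of_lt_of_le k.2 h⟩

def scVecGo {𝒳 : Type*} {n : ℕ} (g : (i : Fin n) → (Fin i.1 → 𝒳) → 𝒳) :
    (k : ℕ) → k < n → 𝒳
  | k, hk => g ⟨k, hk⟩ (fun j => scVecGo g j.1 (j.2.trans hk))
termination_by k _ => k
decreasing_by exact j.2

def scVec {𝒳 : Type*} {n : ℕ} (g : (i : Fin n) → (Fin i.1 → 𝒳) → 𝒳) : Fin n → 𝒳 :=
  fun i => scVecGo g i.1 i.2

def scDec {𝒳 𝒴 : Type*} {n l : ℕ}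
    (I1 : Finset (Fin n)) (hc1 : I1.card = l)
    (f : (i : Fin n) → (Fin i.1 → 𝒳) → (Fin n → 𝒴) → 𝒳)
    (c : Fin l → 𝒳) (y : Fin n → 𝒴) : Fin n → 𝒳 :=
  scVec (fun i pref => if h : i ∈ I1 then c ((I1.orderIsoOfFin hc1).symm ⟨i, h⟩) else f i pref y)

def scDecOrd {𝒳 𝒴 : Type*} {n l : ℕ}
    (f : (i : Fin n) → (Fin i.1 → 𝒳) → (Fin n → 𝒴) → 𝒳)
    (c : Fin l → 𝒳) (y : Fin n → 𝒴) : Fin n → 𝒳 :=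
  scVec (fun i pref => if h : i.1 < l then c ⟨i.1, h⟩ else f i pref y)

lemma probOf_nonneg {Ω : Type*} [Fintype Ω] (p : Ω → ℝ) (hp : ∀ ω, 0 ≤ p ω) (E : Set Ω) :
    0 ≤ probOf p E :=
  Finset.sum_nonneg fun ω _ => Set.indicator_nonneg (fun ω _ => hp ω) ω

lemma probOf_mono {Ω : Type*} [Fintype Ω] (p : Ω → ℝ) (hp : ∀ ω, 0 ≤ p ω) {E F : Set Ω}
    (h : E ⊆ F) : probOf p E ≤ probOf p F :=
  Finset.sum_le_sum fun ω _ => Set.indicator_le_indicator_of_subset h (fun _ => hp _) ω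

lemma probOf_partition {Ω Z : Type*} [Fintype Ω] [Fintype Z] (p : Ω → ℝ) (V : Ω → Z)
    (E : Set Ω) : probOf p E = ∑ v, probOf p (E ∩ {ω | V ω = v}) := by
  classical
  unfold probOf
  rw [Finset.sum_comm]
  refine Finset.sum_congr rfl fun ω _ => ?_
  rw [Finset.sum_eq_single (V ω)]
  · by_cases h : ω ∈ E
    · rw [Set.indicator_of_mem h,
        Set.indicator_of_mem (show ω ∈ E ∩ {ω' | V ω' = V ω} from ⟨h, rfl⟩)]
    · rw [Set.indicator_of_notMem h, Set.indicator_of_notMem (fun hh => h hh.1)]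
  · exact fun v _ hv => Set.indicator_of_notMem (fun hh => hv hh.2.symm) _
  · simp

lemma probOf_union_disj {Ω : Type*} [Fintype Ω] (p : Ω → ℝ) (E F : Set Ω) (h : Disjoint E F) :
    probOf p (E ∪ F) = probOf p E + probOf p F := by
  unfold probOf
  rw [← Finset.sum_add_distrib]
  refine Finset.sum_congr rfl fun ω _ => ?_
  rw [Set.indicator_union_of_disjoint h]

lemma probOf_union_le {Ω : Type*} [Fintype Ω] (p : Ω → ℝ) (hp : ∀ ω, 0 ≤ p ω) (E F : Set Ω) :
    probOf p (E ∪ F) ≤ probOf p E + probOf p F := by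
  unfold probOf
  rw [← Finset.sum_add_distrib]
  refine Finset.sum_le_sum fun ω _ => ?_
  by_cases hE : ω ∈ E
  · rw [Set.indicator_of_mem (Set.mem_union_left _ hE), Set.indicator_of_mem hE]
    exact le_add_of_nonneg_right (Set.indicator_nonneg (fun ω _ => hp ω) ω)
  · by_cases hF : ω ∈ F
    · rw [Set.indicator_of_mem (Set.mem_union_right _ hF), Set.indicator_of_mem hF]
      exact le_add_of_nonneg_left (Set.indicator_nonneg (fun ω _ => hp ω) ω)
    · rw [Set.indicator_of_notMem (fun h => h.elim hE hF)]
      exact add_nonneg (Set.indicator_nonneg (fun ω _ => hp ω) ω)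
        (Set.indicator_nonneg (fun ω _ => hp ω) ω)

lemma probOf_biUnion_le {Ω ι : Type*} [Fintype Ω] (p : Ω → ℝ) (hp : ∀ ω, 0 ≤ p ω)
    (s : Finset ι) (B : ι → Set Ω) :
    probOf p (⋃ i ∈ s, B i) ≤ ∑ i ∈ s, probOf p (B i) := by
  classical
  induction s using Finset.induction with
  | empty => simp [probOf]
  | @insert a s ha ih =>
      rw [Finset.set_biUnion_insert, Finset.sum_insert ha]
      exact le_trans (probOf_union_le p hp _ _) (by linarith)

lemma key_entropy_ineq {ι : Type*} [Fintype ι] (q : ι → ℝ) (h0 : ∀ u, 0 ≤ q u)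
    (h1 : ∑ u, q u = 1) (m : ι) (hm : ∀ u, q u ≤ q m) :
    2 * Real.log 2 * (1 - q m) ≤ ∑ u, Real.negMulLog (q u) := by
  classical
  have hqm_pos : 0 < q m := by
    rcases lt_or_eq_of_le (h0 m) with h | h
    · exact h
    · exfalso
      have hz : ∀ u, q u = 0 := fun u => le_antisymm (h ▸ hm u) (h0 u)
      rw [Finset.sum_congr rfl (fun u _ => hz u)] at h1
      simp at h1
  have hqm1 : q m ≤ 1 := h1 ▸ Finset.single_le_sum (fun u _ => h0 u) (Finset.mem_univ m)
  have hlog2 : Real.log 2 ≤ 1 := by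
    have := Real.log_le_sub_one_of_pos (by norm_num : (0:ℝ) < 2); linarith
  have hlog2pos : 0 < Real.log 2 := Real.log_pos (by norm_num)
  by_cases hc : q m ≤ 1/2
  · have step1 : ∀ u, q u * (-Real.log (q m)) ≤ Real.negMulLog (q u) := by
      intro u
      rcases eq_or_lt_of_le (h0 u) with h | h
      · simp [← h, Real.negMulLog]
      · have hle : Real.log (q u) ≤ Real.log (q m) :=
          Real.log_le_log h (hm u)
        unfold Real.negMulLog
        nlinarith [h.le]
    have hsum : -Real.log (q m) ≤ ∑ u, Real.negMulLog (q u) := by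
      calc -Real.log (q m) = ∑ u, q u * (-Real.log (q m)) := by
            rw [← Finset.sum_mul, h1, one_mul]
        _ ≤ _ := Finset.sum_le_sum fun u _ => step1 u
    have hlq : Real.log 2 + Real.log (q m) ≤ 2 * q m - 1 := by
      have h2 := Real.log_le_sub_one_of_pos (mul_pos two_pos hqm_pos)
      rw [Real.log_mul (by norm_num) (ne_of_gt hqm_pos)] at h2
      linarith
    nlinarith
  · push_neg at hc
    set s := 1 - q m with hs
    have hs0 : 0 ≤ s := by simp only [hs]; linarith
    have hs2 : s ≤ 1/2 := by simp only [hs]; linarith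
    have hsum_others : ∑ u ∈ Finset.univ.erase m, q u = s := by
      have h2 := Finset.add_sum_erase Finset.univ q (Finset.mem_univ m)
      rw [h1] at h2
      simp only [hs]; linarith
    rcases eq_or_lt_of_le hs0 with hseq | hspos
    · have hnn : (0:ℝ) ≤ ∑ u, Real.negMulLog (q u) :=
        Finset.sum_nonneg fun u _ => Real.negMulLog_nonneg (h0 u) (le_trans (hm u) hqm1)
      rw [← hseq]
      simpa using hnn
    · have hub : ∀ u ∈ Finset.univ.erase m, q u ≤ s := fun u hu =>
        hsum_others ▸ Finset.single_le_sum (fun v _ => h0 v) hu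
      have h_others : s * Real.log 2 ≤ ∑ u ∈ Finset.univ.erase m, Real.negMulLog (q u) := by
        have hlogs : Real.log s ≤ -Real.log 2 := by
          have := Real.log_le_log hspos hs2
          rw [show (1:ℝ)/2 = 2⁻¹ by norm_num, Real.log_inv] at this
          exact this
        have step1 : ∀ u ∈ Finset.univ.erase m, q u * Real.log 2 ≤ Real.negMulLog (q u) := by
          intro u hu
          rcases eq_or_lt_of_le (h0 u) with h | h
          · simp [← h, Real.negMulLog]
          · have : Real.log (q u) ≤ Real.log s := Real.log_le_log h (hub u hu)
            unfold Real.negMulLog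
            nlinarith [h.le]
        calc s * Real.log 2 = ∑ u ∈ Finset.univ.erase m, q u * Real.log 2 := by
              rw [← Finset.sum_mul, hsum_others]
          _ ≤ _ := Finset.sum_le_sum step1
      have h_main : s * Real.log 2 ≤ Real.negMulLog (q m) := by
        have hcc := Real.concaveOn_negMulLog.2 (Set.mem_Ici.mpr (by norm_num : (0:ℝ) ≤ 1/2))
          (Set.mem_Ici.mpr (by norm_num : (0:ℝ) ≤ 1))
          (by linarith : (0:ℝ) ≤ 2*s) (by linarith : (0:ℝ) ≤ 1 - 2*s) (by ring)
        have hx : (2*s) • ((1:ℝ)/2) + (1 - 2*s) • (1:ℝ) = q m := by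
          simp only [smul_eq_mul, hs]; ring
        have hval : Real.negMulLog ((1:ℝ)/2) = (1/2) * Real.log 2 := by
          unfold Real.negMulLog
          rw [show (1:ℝ)/2 = 2⁻¹ by norm_num, Real.log_inv]
          ring
        rw [hx, hval, Real.negMulLog_one] at hcc
        simp only [smul_eq_mul] at hcc
        nlinarith
      have hsplit : ∑ u, Real.negMulLog (q u)
          = Real.negMulLog (q m) + ∑ u ∈ Finset.univ.erase m, Real.negMulLog (q u) :=
        (Finset.add_sum_erase Finset.univ (fun u => Real.negMulLog (q u)) (Finset.mem_univ m)).symm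
      rw [hsplit]
      nlinarith

lemma step_bound {Ω 𝒳 Z : Type*} [Fintype Ω] [Fintype 𝒳] [Fintype Z]
    (μ : Ω → ℝ) (hμ0 : ∀ ω, 0 ≤ μ ω)
    (U : Ω → 𝒳) (V : Ω → Z) (d : Z → 𝒳)
    (hMAP : ∀ v : Z, 0 < probOf μ {ω | V ω = v} → ∀ a,
      probOf μ ({ω | U ω = a} ∩ {ω | V ω = v}) ≤ probOf μ ({ω | U ω = d v} ∩ {ω | V ω = v})) :
    2 * Real.log 2 * probOf μ {ω | d (V ω) ≠ U ω} ≤ condEntropyOf μ U V := by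
  classical
  have hset : ∀ (u : 𝒳) (v : Z),
      {ω | (U ω, V ω) = (u, v)} = ({ω | U ω = u} ∩ {ω | V ω = v}) := by
    intro u v; ext ω; simp [Prod.ext_iff]
  have hH : condEntropyOf μ U V = ∑ v,
      ((∑ u, Real.negMulLog (probOf μ ({ω | U ω = u} ∩ {ω | V ω = v})))
        - Real.negMulLog (probOf μ {ω | V ω = v})) := by
    unfold condEntropyOf entropyOf
    rw [Finset.sum_sub_distrib]
    congr 1
    rw [Fintype.sum_prod_type]
    rw [Finset.sum_comm]
    refine Finset.sum_congr rfl fun v _ => Finset.sum_congr rfl fun u _ => ?_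
    rw [hset]
  rw [hH, probOf_partition μ V {ω | d (V ω) ≠ U ω}, Finset.mul_sum]
  refine Finset.sum_le_sum fun v _ => ?_
  set Pv := probOf μ {ω | V ω = v} with hPv
  by_cases hpos : 0 < Pv
  · set q : 𝒳 → ℝ := fun u => probOf μ ({ω | U ω = u} ∩ {ω | V ω = v}) / Pv with hq
    have hPuv : ∀ u, probOf μ ({ω | U ω = u} ∩ {ω | V ω = v}) = Pv * q u := by
      intro u; rw [hq]; field_simp
    have hq0 : ∀ u, 0 ≤ q u := fun u =>
      div_nonneg (probOf_nonneg μ hμ0 _) hpos.le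
    have hqsum : ∑ u, q u = 1 := by
      have hp2 := probOf_partition μ U {ω | V ω = v}
      have hic : ∀ u : 𝒳, {ω | V ω = v} ∩ {ω | U ω = u} = {ω | U ω = u} ∩ {ω | V ω = v} :=
        fun u => Set.inter_comm _ _
      rw [Finset.sum_congr rfl (fun u _ => by rw [hic u])] at hp2
      rw [hq]
      rw [← Finset.sum_div, ← hp2]
      field_simp
      exact hPv.symm
    have hmax : ∀ u, q u ≤ q (d v) := fun u => by
      show probOf μ ({ω | U ω = u} ∩ {ω | V ω = v}) / Pv
        ≤ probOf μ ({ω | U ω = d v} ∩ {ω | V ω = v}) / Pv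
      gcongr ?_ / Pv
      exact hMAP v hpos u
    have hkey := key_entropy_ineq q hq0 hqsum (d v) hmax
    have hBv : probOf μ ({ω | d (V ω) ≠ U ω} ∩ {ω | V ω = v})
        = Pv - probOf μ ({ω | U ω = d v} ∩ {ω | V ω = v}) := by
      have hunion : {ω | V ω = v} = ({ω | d (V ω) ≠ U ω} ∩ {ω | V ω = v})
          ∪ ({ω | U ω = d v} ∩ {ω | V ω = v}) := by
        ext ω
        simp only [Set.mem_setOf_eq, Set.mem_union, Set.mem_inter_iff]
        constructor
        · intro h
          by_cases he : U ω = d v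
          · exact Or.inr ⟨he, h⟩
          · exact Or.inl ⟨by rw [h]; exact fun hh => he hh.symm, h⟩
        · rintro (h | h) <;> exact h.2
      have hdisj : Disjoint ({ω | d (V ω) ≠ U ω} ∩ {ω | V ω = v})
          ({ω | U ω = d v} ∩ {ω | V ω = v}) := by
        rw [Set.disjoint_left]
        rintro ω ⟨h1, h2⟩ ⟨h3, _⟩
        simp only [Set.mem_setOf_eq] at h1 h2 h3
        exact h1 (by rw [h2]; exact h3.symm)
      have := probOf_union_disj μ _ _ hdisj
      rw [← hunion] at this
      rw [hPv] at *
      linarith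
    have hent : (∑ u, Real.negMulLog (probOf μ ({ω | U ω = u} ∩ {ω | V ω = v})))
        - Real.negMulLog Pv = Pv * ∑ u, Real.negMulLog (q u) := by
      rw [Finset.sum_congr rfl (fun u _ => by rw [hPuv u, Real.negMulLog_mul])]
      rw [Finset.sum_add_distrib, ← Finset.sum_mul, hqsum, ← Finset.mul_sum]
      ring
    rw [hBv, hent, hPuv (d v)]
    have : 2 * Real.log 2 * (Pv - Pv * q (d v)) = Pv * (2 * Real.log 2 * (1 - q (d v))) := by ring
    rw [this]
    exact mul_le_mul_of_nonneg_left hkey hpos.le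
  · have hPv0 : Pv = 0 := le_antisymm (not_lt.mp hpos) (probOf_nonneg μ hμ0 _)
    have hz : ∀ (E : Set Ω), E ⊆ {ω | V ω = v} → probOf μ E = 0 := fun E hE =>
      le_antisymm (hPv0 ▸ probOf_mono μ hμ0 hE) (probOf_nonneg μ hμ0 E)
    rw [hz _ Set.inter_subset_right]
    have hu0 : ∀ u : 𝒳, probOf μ ({ω | U ω = u} ∩ {ω | V ω = v}) = 0 :=
      fun u => hz _ Set.inter_subset_right
    rw [Finset.sum_congr rfl (fun u _ => by rw [hu0 u])]
    simp [hPv0]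

lemma scVec_eq {𝒳 : Type*} {n : ℕ} (g : (i : Fin n) → (Fin i.1 → 𝒳) → 𝒳) (v : Fin n → 𝒳)
    (h : ∀ i : Fin n, g i (prefixVec v i.1 i.2.le) = v i) : scVec g = v := by
  have H : ∀ k, ∀ (hk : k < n), scVecGo g k hk = v ⟨k, hk⟩ := by
    intro k
    induction k using Nat.strong_induction_on with
    | _ k ih =>
      intro hk
      rw [scVecGo]
      have hpref : (fun j : Fin k => scVecGo g j.1 (j.2.trans hk)) = prefixVec v k hk.le := by
        funext j
        exact ih j.1 j.2 _
      rw [hpref]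
      exact h ⟨k, hk⟩
  funext i
  exact H i.1 i.2

/-- for an arbitrary partition `(I1, I0)` and the MAP SC decoder `f`, the
induced source decoder `ψ = T⁻¹ ∘ f` satisfies
`Prob(ψ(AX,Y) ≠ X) ≤ (1/2) · Σ_{i ∈ I0} H(C_i | C_1^{i-1}, Y)` with entropy in bits. -/
theorem stmt6
    {𝒳 𝒴 : Type*} [Fintype 𝒳] [Fintype 𝒴]
    (hcard : 2 ≤ Fintype.card 𝒳)
    (n l : ℕ) (hl : l ≤ n)
    (μ : ((Fin n → 𝒳) × (Fin n → 𝒴)) → ℝ)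
    (hμ0 : ∀ ω, 0 ≤ μ ω) (hμ1 : ∑ ω, μ ω = 1)
    (A : (Fin n → 𝒳) → (Fin l → 𝒳)) (B : (Fin n → 𝒳) → (Fin (n - l) → 𝒳))
    (I1 I0 : Finset (Fin n))
    (hdisj : Disjoint I1 I0) (huniv : I1 ∪ I0 = Finset.univ)
    (hc1 : I1.card = l) (hc0 : I0.card = n - l)
    (T : (Fin n → 𝒳) ≃ (Fin n → 𝒳))
    (hT1 : ∀ x (j : Fin l), T x (I1.orderIsoOfFin hc1 j).1 = A x j)
    (hT0 : ∀ x (j : Fin (n - l)), T x (I0.orderIsoOfFin hc0 j).1 = B x j)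
    (f : (i : Fin n) → (Fin i.1 → 𝒳) → (Fin n → 𝒴) → 𝒳)
    (hMAP : ∀ i ∈ I0, ∀ (cp : Fin i.1 → 𝒳) (y : Fin n → 𝒴),
      0 < probOf μ {ω | prefixVec (T ω.1) i.1 i.2.le = cp ∧ ω.2 = y} →
      ∀ a : 𝒳,
        condProb μ {ω | T ω.1 i = a} {ω | prefixVec (T ω.1) i.1 i.2.le = cp ∧ ω.2 = y} ≤
          condProb μ {ω | T ω.1 i = f i cp y}
            {ω | prefixVec (T ω.1) i.1 i.2.le = cp ∧ ω.2 = y}) :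
    probOf μ {ω | T.symm (scDec I1 hc1 f (A ω.1) ω.2) ≠ ω.1} ≤
      (1 / 2) * ∑ i ∈ I0,
        condEntropyOf μ (fun ω => T ω.1 i)
          (fun ω => (prefixVec (T ω.1) i.1 i.2.le, ω.2)) / Real.log 2 := by
  classical
  have hlog2pos : 0 < Real.log 2 := Real.log_pos (by norm_num)
  set Bset : Fin n → Set ((Fin n → 𝒳) × (Fin n → 𝒴)) :=
    fun i => {ω | f i (prefixVec (T ω.1) i.1 i.2.le) ω.2 ≠ T ω.1 i} with hBset
  -- error event inclusion
  have hsub : {ω | T.symm (scDec I1 hc1 f (A ω.1) ω.2) ≠ ω.1} ⊆ ⋃ i ∈ I0, Bset i := by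
    intro ω hω
    simp only [Set.mem_setOf_eq] at hω
    have hne : scDec I1 hc1 f (A ω.1) ω.2 ≠ T ω.1 := by
      intro h
      exact hω (by rw [h, Equiv.symm_apply_apply])
    by_contra hcon
    simp only [Set.mem_iUnion, not_exists, hBset, Set.mem_setOf_eq, not_not] at hcon
    apply hne
    apply scVec_eq
    intro i
    by_cases h : i ∈ I1
    · simp only [dif_pos h]
      have := hT1 ω.1 ((I1.orderIsoOfFin hc1).symm ⟨i, h⟩)
      rw [OrderIso.apply_symm_apply] at this
      exact this.symm
    · have hi0 : i ∈ I0 := by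
        have hu : i ∈ I1 ∪ I0 := huniv ▸ Finset.mem_univ i
        exact (Finset.mem_union.mp hu).resolve_left h
      simp only [dif_neg h]
      exact hcon i hi0
  -- per-index bound
  have key : ∀ i ∈ I0, probOf μ (Bset i) ≤
      condEntropyOf μ (fun ω => T ω.1 i)
        (fun ω => (prefixVec (T ω.1) i.1 i.2.le, ω.2)) / (2 * Real.log 2) := by
    intro i hi
    rw [le_div_iff₀ (by positivity)]
    have hstep := step_bound μ hμ0 (fun ω => T ω.1 i)
      (fun ω => (prefixVec (T ω.1) i.1 i.2.le, ω.2)) (fun v => f i v.1 v.2) ?_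
    · calc probOf μ (Bset i) * (2 * Real.log 2)
          = 2 * Real.log 2 * probOf μ (Bset i) := by ring
        _ ≤ _ := hstep
    · intro v hv a
      have hVset : {ω : (Fin n → 𝒳) × (Fin n → 𝒴) |
          (prefixVec (T ω.1) i.1 i.2.le, ω.2) = v}
          = {ω | prefixVec (T ω.1) i.1 i.2.le = v.1 ∧ ω.2 = v.2} := by
        ext ω; simp [Prod.ext_iff]
      rw [hVset] at hv ⊢
      have hmap := hMAP i hi v.1 v.2 hv a
      unfold condProb at hmap
      have h2 := mul_le_mul_of_nonneg_right hmap hv.le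
      rwa [div_mul_cancel₀ _ (ne_of_gt hv), div_mul_cancel₀ _ (ne_of_gt hv)] at h2
  calc probOf μ {ω | T.symm (scDec I1 hc1 f (A ω.1) ω.2) ≠ ω.1}
      ≤ probOf μ (⋃ i ∈ I0, Bset i) := probOf_mono μ hμ0 hsub
    _ ≤ ∑ i ∈ I0, probOf μ (Bset i) := probOf_biUnion_le μ hμ0 I0 Bset
    _ ≤ ∑ i ∈ I0, condEntropyOf μ (fun ω => T ω.1 i)
          (fun ω => (prefixVec (T ω.1) i.1 i.2.le, ω.2)) / (2 * Real.log 2) :=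
        Finset.sum_le_sum key
    _ = (1 / 2) * ∑ i ∈ I0, condEntropyOf μ (fun ω => T ω.1 i)
          (fun ω => (prefixVec (T ω.1) i.1 i.2.le, ω.2)) / Real.log 2 := by
        rw [Finset.mul_sum]
        refine Finset.sum_congr rfl fun i _ => ?_
        field_simp
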